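/- Let s satisfy s''(t) = 6 t - 6 s(t)^2 on [0, ∞) with s(0) = s'(0) = 0, and suppose s(t) > t^3 - (3/28) t^8 for t ∈ (0, (28/3)^{1/5}). Then for t in this range, s(t) < t^3 - (3/28) t^8 + (3/364) t^{13} - (3/13328) t^{18}. -/

import Mathlib

open Set

private lemma painleve_P'_deriv (x : ℝ) :
    HasDerivAt (fun t : ℝ => t ^ 3 - (3 / 28) * t ^ 8 + (3 / 364) * t ^ 13 - (3 / 13328) * t ^ 18)
      (3 * x ^ 2 - (6 / 7) * x ^ 7 + (3 / 28) * x ^ 12 - (27 / 6664) * x ^ 17) x := by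
  have h := (((hasDerivAt_pow 3 x).sub ((hasDerivAt_pow 8 x).const_mul (3/28 : ℝ))).add
      ((hasDerivAt_pow 13 x).const_mul (3/364 : ℝ))).sub
      ((hasDerivAt_pow 18 x).const_mul (3/13328 : ℝ))
  refine h.congr_deriv ?_
  push_cast
  ring

private lemma painleve_P''_deriv (x : ℝ) :
    HasDerivAt (fun t : ℝ => 3 * t ^ 2 - (6 / 7) * t ^ 7 + (3 / 28) * t ^ 12 - (27 / 6664) * t ^ 17)
      (6 * x - 6 * x ^ 6 + (9 / 7) * x ^ 11 - (27 / 392) * x ^ 16) x := by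
  have h := ((((hasDerivAt_pow 2 x).const_mul (3 : ℝ)).sub
      ((hasDerivAt_pow 7 x).const_mul (6/7 : ℝ))).add
      ((hasDerivAt_pow 12 x).const_mul (3/28 : ℝ))).sub
      ((hasDerivAt_pow 17 x).const_mul (27/6664 : ℝ))
  refine h.congr_deriv ?_
  push_cast
  ring

theorem painleve_refined_upper_bound
    (s : ℝ → ℝ)
    (hdiff : ∀ t ∈ Ici (0 : ℝ), DifferentiableAt ℝ s t ∧ DifferentiableAt ℝ (deriv s) t)
    (heq : ∀ t ∈ Ici (0 : ℝ), deriv (deriv s) t = 6 * t - 6 * (s t) ^ 2)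
    (h0 : s 0 = 0) (h0' : deriv s 0 = 0)
    (hlb : ∀ t ∈ Ioo (0 : ℝ) ((28 / 3 : ℝ) ^ ((1 : ℝ) / 5)),
      s t > t ^ 3 - (3 / 28) * t ^ 8) :
    ∀ t ∈ Ioo (0 : ℝ) ((28 / 3 : ℝ) ^ ((1 : ℝ) / 5)),
      s t < t ^ 3 - (3 / 28) * t ^ 8 + (3 / 364) * t ^ 13 - (3 / 13328) * t ^ 18 := by
  set T : ℝ := (28 / 3 : ℝ) ^ ((1 : ℝ) / 5) with hT
  have hT5 : T ^ (5 : ℕ) = 28 / 3 := by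
    rw [hT, ← Real.rpow_natCast (((28:ℝ)/3) ^ ((1:ℝ)/5)) 5, ← Real.rpow_mul (by norm_num)]
    norm_num
  intro t ht
  set P : ℝ → ℝ := fun x => x ^ 3 - (3 / 28) * x ^ 8 + (3 / 364) * x ^ 13 - (3 / 13328) * x ^ 18
    with hP
  set Q : ℝ → ℝ := fun x => 3 * x ^ 2 - (6 / 7) * x ^ 7 + (3 / 28) * x ^ 12 - (27 / 6664) * x ^ 17
    with hQ
  set w : ℝ → ℝ := fun x => Q x - deriv s x with hw
  -- w is continuous on Icc 0 t
  have hwc : ContinuousOn w (Icc 0 t) := by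
    intro x hx
    have hx0 : x ∈ Ici (0 : ℝ) := hx.1
    exact (((painleve_P''_deriv x).continuousAt).sub
      ((hdiff x hx0).2.continuousAt)).continuousWithinAt
  -- deriv w is positive on Ioo 0 t
  have hwd : ∀ x ∈ Ioo (0 : ℝ) t, 0 < deriv w x := by
    intro x hx
    have hx0 : x ∈ Ici (0 : ℝ) := le_of_lt hx.1
    have hxT : x ∈ Ioo (0 : ℝ) T := ⟨hx.1, hx.2.trans ht.2⟩
    have hds : HasDerivAt (deriv s) (deriv (deriv s) x) x := (hdiff x hx0).2.hasDerivAt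
    have hwd' : HasDerivAt w
        ((6 * x - 6 * x ^ 6 + (9 / 7) * x ^ 11 - (27 / 392) * x ^ 16) - deriv (deriv s) x) x :=
      (painleve_P''_deriv x).sub hds
    rw [hwd'.deriv, heq x hx0]
    have hL : 0 < x ^ 3 - (3 / 28) * x ^ 8 := by
      have h5 : x ^ (5 : ℕ) < 28 / 3 := by
        calc x ^ (5 : ℕ) < T ^ (5 : ℕ) := by
              apply pow_lt_pow_left₀ hxT.2 (le_of_lt hxT.1)
              norm_num
          _ = 28 / 3 := hT5
      nlinarith [pow_pos hxT.1 3, pow_pos hxT.1 5]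
    have hs : x ^ 3 - (3 / 28) * x ^ 8 < s x := hlb x hxT
    nlinarith [sq_nonneg (s x + (x ^ 3 - (3 / 28) * x ^ 8))]
  -- w is strictly monotone on Icc 0 t, hence w > 0 on Ioo 0 t
  have hwmono : StrictMonoOn w (Icc 0 t) :=
    strictMonoOn_of_deriv_pos (convex_Icc 0 t) hwc (by
      rw [interior_Icc]; exact hwd)
  have hw0 : w 0 = 0 := by
    simp [hw, hQ, h0']
  have hwpos : ∀ x ∈ Ioo (0 : ℝ) t, 0 < w x := by
    intro x hx
    have := hwmono ⟨le_refl 0, le_of_lt (hx.1.trans hx.2)⟩ ⟨le_of_lt hx.1, le_of_lt hx.2⟩ hx.1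
    rwa [hw0] at this
  -- u = P - s is strictly monotone on Icc 0 t
  set u : ℝ → ℝ := fun x => P x - s x with hu
  have huc : ContinuousOn u (Icc 0 t) := by
    intro x hx
    exact (((painleve_P'_deriv x).continuousAt).sub
      ((hdiff x hx.1).1.continuousAt)).continuousWithinAt
  have hud : ∀ x ∈ Ioo (0 : ℝ) t, 0 < deriv u x := by
    intro x hx
    have hx0 : x ∈ Ici (0 : ℝ) := le_of_lt hx.1
    have hds : HasDerivAt s (deriv s x) x := (hdiff x hx0).1.hasDerivAt
    have hud' : HasDerivAt u (Q x - deriv s x) x := (painleve_P'_deriv x).sub hds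
    rw [hud'.deriv]
    exact hwpos x hx
  have humono : StrictMonoOn u (Icc 0 t) :=
    strictMonoOn_of_deriv_pos (convex_Icc 0 t) huc (by
      rw [interior_Icc]; exact hud)
  have hu0 : u 0 = 0 := by simp [hu, hP, h0]
  have := humono ⟨le_refl 0, le_of_lt ht.1⟩ ⟨le_of_lt ht.1, le_refl t⟩ ht.1
  rw [hu0] at this
  simp only [hu, hP] at this
  linarith
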